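/- Let (u_1,…,u_i) be a reverse path with i ≥ 2 and let v ∈ V with v ≠ u_1. Then the deterministic PROBE score after the (i−1)-th iteration satisfies Score(v, i−1) = P(v,(u_1,…,u_i)), the first-meeting probability of v with respect to the reverse path (u_1,…,u_i). -/

import Mathlib

open scoped BigOperators Classical

variable {V : Type*}

/-- `p` is a possible realization of a `√c`-walk from `u`: it is nonempty,
starts at `u`, and each step moves to an in-neighbor of the current node. -/
def IsWalkFrom (I : V → Finset V) (u : V) (p : List V) : Prop :=
  p.head? = some u ∧ List.Chain' (fun a b => b ∈ I a) p

/-- The probability that the `√c`-walk from `u` is exactly the finite sequence `p`: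
`(1−√c)·∏_{k=1}^{ℓ−1} (√c/|I(u_k)|)` if `p = (u_1,…,u_ℓ)` is a walk from `u`,
and `0` otherwise. -/
noncomputable def walkWeight (I : V → Finset V) (c : ℝ) (u : V) (p : List V) : ℝ :=
  if IsWalkFrom I u p then
    (1 - Real.sqrt c) *
      ∏ k ∈ Finset.range (p.length - 1), Real.sqrt c / ((I (p.getD k u)).card : ℝ)
  else 0

/-- Deterministic PROBE scores of a reverse path, where `q` is the *reversed*
reverse path, i.e. `q = (u_i, u_{i-1}, …, u_1)` for the reverse path
`(u_1,…,u_i)`: `Score(v,0) = 1` iff `v = u_i`, and `Score(v,j+1) = 0` if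
`v = u_{i-j-1}` (which is `q[j+1]`), else `∑_{x∈I(v)} (√c/|I(v)|)·Score(x,j)`. -/
noncomputable def Score (I : V → Finset V) (c : ℝ) (q : List V) : ℕ → V → ℝ
  | 0, v => if q.head? = some v then 1 else 0
  | j + 1, v =>
      if q[j + 1]? = some v then 0
      else ∑ x ∈ I v, Real.sqrt c / ((I v).card : ℝ) * Score I c q j x

/-- First-meeting probability `P(v,(u_1,…,u_i))` of `v` with respect to the
reverse path `p = (u_1,…,u_i)`: the probability that a `√c`-walk from `v` has
length at least `i`, its `i`-th entry equals `u_i`, and its `k`-th entry differs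
from `u_k` for all `1 ≤ k ≤ i−1`. -/
noncomputable def firstMeetProb (I : V → Finset V) (c : ℝ) (v : V) (p : List V) : ℝ :=
  ∑' w : List V,
    walkWeight I c v w *
      (if p.length ≤ w.length ∧ w[p.length - 1]? = p[p.length - 1]? ∧
          ∀ k < p.length - 1, w[k]? ≠ p[k]? then 1 else 0)

open scoped ENNReal

noncomputable def WW (I : V → Finset V) (c : ℝ) (v : V) (w : List V) : ℝ≥0∞ :=
  ENNReal.ofReal (walkWeight I c v w)

section PW

variable (I : V → Finset V) (c : ℝ) {v x y : V} {t : List V}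

lemma walkWeight_nonneg (hc1 : c ≤ 1) (v : V) (w : List V) : 0 ≤ walkWeight I c v w := by
  rw [walkWeight]
  split
  · apply mul_nonneg
    · have : Real.sqrt c ≤ 1 := by
        calc Real.sqrt c ≤ Real.sqrt 1 := Real.sqrt_le_sqrt hc1
        _ = 1 := Real.sqrt_one
      linarith
    · exact Finset.prod_nonneg fun k _ => div_nonneg (Real.sqrt_nonneg c) (Nat.cast_nonneg _)
  · exact le_rfl

lemma walkWeight_nil : walkWeight I c v [] = 0 := by
  rw [walkWeight, if_neg]
  rintro ⟨h, -⟩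
  simp at h

lemma walkWeight_singleton : walkWeight I c v [v] = 1 - Real.sqrt c := by
  rw [walkWeight, if_pos ⟨rfl, List.isChain_singleton v⟩]
  simp

lemma walkWeight_cons_ne (h : y ≠ v) : walkWeight I c v (y :: t) = 0 := by
  rw [walkWeight, if_neg]
  rintro ⟨h', -⟩
  simp only [List.head?_cons, Option.some.injEq] at h'
  exact h h'

lemma walkWeight_cons_cons (hx : x ∈ I v) :
    walkWeight I c v (v :: x :: t) =
      Real.sqrt c / ((I v).card : ℝ) * walkWeight I c x (x :: t) := by
  rw [walkWeight, walkWeight]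
  by_cases hch : List.Chain' (fun a b => b ∈ I a) (x :: t)
  · rw [if_pos ⟨rfl, List.isChain_cons_cons.2 ⟨hx, hch⟩⟩, if_pos ⟨rfl, hch⟩]
    have hlen1 : (v :: x :: t).length - 1 = t.length + 1 := by simp
    have hlen2 : (x :: t).length - 1 = t.length := by simp
    rw [hlen1, hlen2, Finset.prod_range_succ']
    have h0 : (v :: x :: t).getD 0 v = v := rfl
    have hprod : ∀ k ∈ Finset.range t.length,
        Real.sqrt c / ((I ((v :: x :: t).getD (k + 1) v)).card : ℝ)
          = Real.sqrt c / ((I ((x :: t).getD k x)).card : ℝ) := by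
      intro k hk
      have hk' : k < (x :: t).length := by
        simp only [Finset.mem_range] at hk
        simp only [List.length_cons]
        omega
      rw [List.getD_cons_succ, List.getD_eq_getElem _ _ hk', List.getD_eq_getElem _ _ hk']
    rw [Finset.prod_congr rfl hprod, h0]
    ring
  · rw [if_neg, if_neg, mul_zero]
    · rintro ⟨-, h⟩; exact hch h
    · rintro ⟨-, h⟩; exact hch (List.isChain_cons_cons.1 h).2

lemma walkWeight_cons_cons_not (hx : x ∉ I v) :
    walkWeight I c v (v :: x :: t) = 0 := by
  rw [walkWeight, if_neg]
  rintro ⟨-, h⟩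
  exact hx (List.isChain_cons_cons.1 h).1

lemma WW_nil : WW I c v [] = 0 := by rw [WW, walkWeight_nil, ENNReal.ofReal_zero]

lemma WW_singleton : WW I c v [v] = ENNReal.ofReal (1 - Real.sqrt c) := by
  rw [WW, walkWeight_singleton]

lemma WW_cons_ne (h : y ≠ v) : WW I c v (y :: t) = 0 := by
  rw [WW, walkWeight_cons_ne I c h, ENNReal.ofReal_zero]

lemma WW_cons_cons (hc1 : c ≤ 1) :
    WW I c v (v :: x :: t) =
      (if x ∈ I v then ENNReal.ofReal (Real.sqrt c / ((I v).card : ℝ)) else 0)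
        * WW I c x (x :: t) := by
  by_cases hx : x ∈ I v
  · rw [if_pos hx, WW, walkWeight_cons_cons I c hx, WW,
      ENNReal.ofReal_mul (div_nonneg (Real.sqrt_nonneg c) (Nat.cast_nonneg _))]
  · rw [if_neg hx, zero_mul, WW, walkWeight_cons_cons_not I c hx, ENNReal.ofReal_zero]

lemma WW_not_walk (h : ¬ IsWalkFrom I v t) : WW I c v t = 0 := by
  rw [WW, walkWeight, if_neg h, ENNReal.ofReal_zero]

end PW

section TS
variable [Fintype V]

lemma tsum_cons_expand (g : List V → ℝ≥0∞) (h0 : g [] = 0) :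
    ∑' w : List V, g w = ∑ x : V, ∑' t : List V, g (x :: t) := by
  have hinj : Function.Injective (fun p : V × List V => p.1 :: p.2) := by
    rintro ⟨a, s⟩ ⟨b, u⟩ h
    simp only [List.cons.injEq] at h
    exact Prod.ext h.1 h.2
  have hsupp : Function.support g ⊆ Set.range (fun p : V × List V => p.1 :: p.2) := by
    intro w hw
    cases w with
    | nil => exact absurd h0 hw
    | cons a s => exact ⟨(a, s), rfl⟩
  rw [← hinj.tsum_eq hsupp, ENNReal.tsum_prod', tsum_fintype]

lemma tsum_cons_fixed (g : List V → ℝ≥0∞) (a : V) (h0 : g [] = 0)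
    (h1 : ∀ y t, y ≠ a → g (y :: t) = 0) :
    ∑' w : List V, g w = ∑' t : List V, g (a :: t) := by
  rw [tsum_cons_expand g h0]
  refine Fintype.sum_eq_single a fun x hx => ?_
  rw [tsum_congr fun t => h1 x t hx, tsum_zero]
end TS

section Decomp
variable [Fintype V] (I : V → Finset V) (c : ℝ)

lemma tsum_peel (g : List V → ℝ≥0∞) :
    ∑' w : List V, g w = g [] + ∑ x : V, ∑' t : List V, g (x :: t) := by
  rw [ENNReal.tsum_eq_add_tsum_ite ([] : List V)]
  congr 1
  rw [tsum_cons_expand _ (by simp)]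
  exact Finset.sum_congr rfl fun x _ => tsum_congr fun t => if_neg (by simp)

lemma tsum_walk_decomp (hc1 : c ≤ 1) (f : List V → ℝ≥0∞) (v : V) :
    ∑' w : List V, WW I c v w * f w
      = ENNReal.ofReal (1 - Real.sqrt c) * f [v]
        + ∑ x ∈ I v, ENNReal.ofReal (Real.sqrt c / ((I v).card : ℝ))
            * ∑' t : List V, WW I c x t * f (v :: t) := by
  rw [tsum_cons_fixed _ v (by simp [WW_nil]) (fun y t hy => by simp [WW_cons_ne I c hy])]
  rw [tsum_peel]
  rw [show WW I c v (v :: []) = ENNReal.ofReal (1 - Real.sqrt c) from WW_singleton I c]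
  congr 1
  have hxterm : ∀ x : V,
      (∑' t : List V, WW I c v (v :: x :: t) * f (v :: x :: t))
        = (if x ∈ I v then ENNReal.ofReal (Real.sqrt c / ((I v).card : ℝ)) else 0)
            * ∑' t : List V, WW I c x t * f (v :: t) := by
    intro x
    have h1 : ∀ t : List V,
        WW I c v (v :: x :: t) * f (v :: x :: t)
          = (if x ∈ I v then ENNReal.ofReal (Real.sqrt c / ((I v).card : ℝ)) else 0)
              * (WW I c x (x :: t) * f (v :: x :: t)) := by
      intro t
      rw [WW_cons_cons I c hc1, mul_assoc]
    rw [tsum_congr h1, ENNReal.tsum_mul_left]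
    congr 1
    exact (tsum_cons_fixed (fun t => WW I c x t * f (v :: t)) x
      (by simp [WW_nil]) (fun y t hy => by simp [WW_cons_ne I c hy])).symm
  rw [Finset.sum_congr rfl fun x _ => hxterm x]
  rw [← Finset.sum_filter_of_ne (p := fun x => x ∈ I v) ?_]
  · rw [Finset.sum_congr ?_ fun x hx => ?_]
    · ext x; simp
    · rw [if_pos hx]
  · intro x _ hne
    by_contra hmem
    rw [if_neg hmem, zero_mul] at hne
    exact hne rfl

end Decomp

section Total
variable [Fintype V] (I : V → Finset V) (c : ℝ)

lemma tsum_len (hI : ∀ v, (I v).Nonempty) (hc0 : 0 < c) (hc1 : c < 1) :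
    ∀ (n : ℕ) (v : V),
      ∑' w : List V, WW I c v w * (if w.length = n + 1 then 1 else 0)
        = ENNReal.ofReal ((1 - Real.sqrt c) * Real.sqrt c ^ n) := by
  intro n
  induction n with
  | zero =>
    intro v
    rw [tsum_walk_decomp I c hc1.le]
    have h1 : (if ([v] : List V).length = 0 + 1 then (1 : ℝ≥0∞) else 0) = 1 := if_pos rfl
    have h2 : ∀ x : V, (∑' t : List V,
        WW I c x t * (if (v :: t).length = 0 + 1 then 1 else 0)) = 0 := by
      intro x
      rw [tsum_congr (fun t => ?_), tsum_zero]
      cases t with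
      | nil => rw [WW_nil, zero_mul]
      | cons a s => rw [if_neg (by simp), mul_zero]
    rw [h1, mul_one, Finset.sum_congr rfl fun x _ => by rw [h2 x, mul_zero],
      Finset.sum_const_zero, add_zero, pow_zero, mul_one]
  | succ n ih =>
    intro v
    rw [tsum_walk_decomp I c hc1.le]
    have h1 : (if ([v] : List V).length = n + 1 + 1 then (1 : ℝ≥0∞) else 0) = 0 :=
      if_neg (by simp)
    have h2 : ∀ x : V, (∑' t : List V,
        WW I c x t * (if (v :: t).length = n + 1 + 1 then 1 else 0))
          = ENNReal.ofReal ((1 - Real.sqrt c) * Real.sqrt c ^ n) := by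
      intro x
      rw [tsum_congr (fun t => by
        rw [if_congr (show (v :: t).length = n + 1 + 1 ↔ t.length = n + 1 by simp) rfl rfl]),
        ih x]
    rw [h1, mul_zero, zero_add, Finset.sum_congr rfl fun x _ => by rw [h2 x]]
    rw [Finset.sum_const, nsmul_eq_mul]
    have hcard : ((I v).card : ℝ) ≠ 0 := by
      have := (hI v).card_pos
      positivity
    rw [← ENNReal.ofReal_natCast (I v).card,
      ← ENNReal.ofReal_mul (div_nonneg (Real.sqrt_nonneg c) (Nat.cast_nonneg _)),
      ← ENNReal.ofReal_mul (Nat.cast_nonneg _)]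
    congr 1
    field_simp
    ring

lemma tsum_WW (hI : ∀ v, (I v).Nonempty) (hc0 : 0 < c) (hc1 : c < 1) (v : V) :
    ∑' w : List V, WW I c v w = 1 := by
  have hs0 : (0 : ℝ) ≤ Real.sqrt c := Real.sqrt_nonneg c
  have hs1 : Real.sqrt c < 1 := by
    rw [Real.sqrt_lt' one_pos]
    simpa using hc1
  have h1 : ∀ w : List V,
      WW I c v w = ∑' n : ℕ, WW I c v w * (if w.length = n + 1 then 1 else 0) := by
    intro w
    cases w with
    | nil => simp [WW_nil]
    | cons a s =>
      rw [tsum_eq_single s.length ?_]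
      · rw [if_pos (by simp), mul_one]
      · intro n hn
        rw [if_neg (by simp; omega), mul_zero]
  rw [tsum_congr h1, ENNReal.tsum_comm, tsum_congr (fun n => tsum_len I c hI hc0 hc1 n v)]
  have hor : ∀ n : ℕ, ENNReal.ofReal ((1 - Real.sqrt c) * Real.sqrt c ^ n)
      = ENNReal.ofReal (1 - Real.sqrt c) * ENNReal.ofReal (Real.sqrt c) ^ n := by
    intro n
    rw [ENNReal.ofReal_mul (by linarith), ENNReal.ofReal_pow hs0]
  rw [tsum_congr hor, ENNReal.tsum_mul_left, ENNReal.tsum_geometric]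
  have hsub : (1 : ℝ≥0∞) - ENNReal.ofReal (Real.sqrt c) = ENNReal.ofReal (1 - Real.sqrt c) := by
    rw [← ENNReal.ofReal_one, ← ENNReal.ofReal_sub _ hs0]
  rw [hsub]
  exact ENNReal.mul_inv_cancel (ENNReal.ofReal_pos.2 (by linarith)).ne' ENNReal.ofReal_ne_top

lemma score_nonneg (hc0 : 0 ≤ c) (q : List V) : ∀ (j : ℕ) (v : V), 0 ≤ Score I c q j v := by
  intro j
  induction j with
  | zero =>
    intro v
    rw [Score]
    split <;> norm_num
  | succ j ih =>
    intro v
    rw [Score]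
    split
    · exact le_rfl
    · exact Finset.sum_nonneg fun x _ => mul_nonneg
        (div_nonneg (Real.sqrt_nonneg c) (Nat.cast_nonneg _)) (ih x)

end Total

noncomputable def condE (q : List V) (j : ℕ) (w : List V) : ℝ≥0∞ :=
  if j + 1 ≤ w.length ∧ w[j]? = q[0]? ∧ ∀ k < j, w[k]? ≠ q[j - k]? then 1 else 0

section Key
variable [Fintype V] (I : V → Finset V) (c : ℝ)

lemma key (hI : ∀ v, (I v).Nonempty) (hc0 : 0 < c) (hc1 : c < 1) (q : List V) :
    ∀ (j : ℕ) (v : V),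
      ∑' w : List V, WW I c v w * condE q j w = ENNReal.ofReal (Score I c q j v) := by
  intro j
  induction j with
  | zero =>
    intro v
    have hpt : ∀ w : List V, WW I c v w * condE q 0 w
        = (if q.head? = some v then 1 else 0) * WW I c v w := by
      intro w
      by_cases hw : IsWalkFrom I v w
      · obtain ⟨hh, -⟩ := hw
        have hw0 : w[0]? = some v := by rw [← List.head?_eq_getElem?]; exact hh
        have hlen1 : 1 ≤ w.length := by
          cases w with
          | nil => simp at hh
          | cons a s => simp
        rw [condE, if_congr (show (0 + 1 ≤ w.length ∧ w[0]? = q[0]? ∧ ∀ k < 0, w[k]? ≠ q[0 - k]?)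
            ↔ q.head? = some v by
          rw [List.head?_eq_getElem?]
          constructor
          · rintro ⟨-, h, -⟩; rw [← h, hw0]
          · intro h; exact ⟨hlen1, by rw [hw0, h], fun k hk => absurd hk (Nat.not_lt_zero k)⟩)
          rfl rfl, mul_comm]
      · rw [WW_not_walk I c hw, mul_zero, zero_mul]
    rw [tsum_congr hpt, ENNReal.tsum_mul_left, tsum_WW I c hI hc0 hc1, mul_one, Score]
    split <;> simp
  | succ j ih =>
    intro v
    rw [tsum_walk_decomp I c hc1.le]
    have hfv : condE q (j + 1) [v] = 0 := by
      rw [condE, if_neg]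
      rintro ⟨h, -⟩
      simp at h
    rw [hfv, mul_zero, zero_add, Score]
    by_cases hv : q[j + 1]? = some v
    · have hz : ∀ t : List V, condE q (j + 1) (v :: t) = 0 := by
        intro t
        rw [condE, if_neg]
        rintro ⟨-, -, hall⟩
        exact hall 0 (Nat.succ_pos j) (by simpa using hv.symm)
      rw [if_pos hv, ENNReal.ofReal_zero]
      rw [Finset.sum_congr rfl fun x _ => ?_, Finset.sum_const_zero]
      rw [tsum_congr (fun t => by rw [hz t, mul_zero]), tsum_zero, mul_zero]
    · have hcond : ∀ t : List V, condE q (j + 1) (v :: t) = condE q j t := by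
        intro t
        rw [condE, condE]
        refine if_congr ?_ rfl rfl
        constructor
        · rintro ⟨h1, h2, h3⟩
          refine ⟨by simpa using h1, by simpa using h2, ?_⟩
          intro m hm
          have := h3 (m + 1) (by omega)
          rw [show j + 1 - (m + 1) = j - m by omega] at this
          simpa using this
        · rintro ⟨h1, h2, h3⟩
          refine ⟨by simp; omega, by simpa using h2, ?_⟩
          intro k hk
          match k with
          | 0 =>
            simp only [List.getElem?_cons_zero, Nat.sub_zero]
            exact fun h => hv h.symm
          | m + 1 =>
            rw [show j + 1 - (m + 1) = j - m by omega, List.getElem?_cons_succ]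
            exact h3 m (by omega)
      have hin : ∀ x : V, (∑' t : List V, WW I c x t * condE q (j + 1) (v :: t))
          = ENNReal.ofReal (Score I c q j x) := by
        intro x
        rw [tsum_congr (fun t => by rw [hcond t]), ih x]
      rw [if_neg hv, Finset.sum_congr rfl fun x _ => by rw [hin x]]
      have hnn : (0 : ℝ) ≤ Real.sqrt c / ((I v).card : ℝ) :=
        div_nonneg (Real.sqrt_nonneg c) (Nat.cast_nonneg _)
      rw [Finset.sum_congr rfl fun x _ => by
        rw [← ENNReal.ofReal_mul hnn]]
      rw [← ENNReal.ofReal_sum_of_nonneg fun x _ =>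
        mul_nonneg hnn (score_nonneg I c hc0.le q j x)]

end Key

/-- Lemma 3.2: for a reverse path `p = (u_1,…,u_i)` with `i ≥ 2` and a node
`v ≠ u_1`, the deterministic PROBE score after the `(i−1)`-th iteration equals
the first-meeting probability of `v` with respect to `p`. -/
theorem score_eq_firstMeetProb [Fintype V]
    (I : V → Finset V) (hI : ∀ v, (I v).Nonempty)
    (c : ℝ) (hc0 : 0 < c) (hc1 : c < 1)
    (p : List V) (hchain : List.Chain' (fun a b => b ∈ I a) p) (hlen : 2 ≤ p.length)
    (v : V) (hv : p.head? ≠ some v) :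
    Score I c p.reverse (p.length - 1) v = firstMeetProb I c v p := by
  set q := p.reverse with hqdef
  set j := p.length - 1 with hjdef
  have hql : q.length = p.length := List.length_reverse
  have hj1 : j + 1 = p.length := by omega
  have hcond : ∀ w : List V, condE q j w
      = if p.length ≤ w.length ∧ w[p.length - 1]? = p[p.length - 1]? ∧
          ∀ k < p.length - 1, w[k]? ≠ p[k]? then 1 else 0 := by
    intro w
    rw [condE]
    refine if_congr ?_ rfl rfl
    have e0 : q[0]? = p[p.length - 1]? := by
      rw [hqdef, List.getElem?_reverse (by omega)]
      norm_num
    have ek : ∀ k, k < j → q[j - k]? = p[k]? := by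
      intro k hk
      rw [hqdef, List.getElem?_reverse (by omega)]
      congr 1
      omega
    constructor
    · rintro ⟨h1, h2, h3⟩
      exact ⟨by omega, by rw [← e0]; exact h2, fun k hk => by rw [← ek k hk]; exact h3 k hk⟩
    · rintro ⟨h1, h2, h3⟩
      exact ⟨by omega, by rw [e0]; exact h2, fun k hk => by rw [ek k hk]; exact h3 k hk⟩
  have hk := key I c hI hc0 hc1 q j v
  have hscore : 0 ≤ Score I c q j v := score_nonneg I c hc0.le q j v
  calc Score I c q j v
      = (ENNReal.ofReal (Score I c q j v)).toReal := (ENNReal.toReal_ofReal hscore).symm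
    _ = (∑' w : List V, WW I c v w * condE q j w).toReal := by rw [hk]
    _ = ∑' w : List V, (WW I c v w * condE q j w).toReal := by
        rw [ENNReal.tsum_toReal_eq]
        intro w
        refine ENNReal.mul_ne_top ENNReal.ofReal_ne_top ?_
        rw [condE]
        split <;> simp
    _ = firstMeetProb I c v p := by
        rw [firstMeetProb]
        refine tsum_congr fun w => ?_
        rw [hcond w, ENNReal.toReal_mul, WW, ENNReal.toReal_ofReal
          (walkWeight_nonneg I c hc1.le v w)]
        congr 1
        split <;> simp
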